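/- Let F, f : ℝ^p × ℝ^q → ℝ be such that F is L_{F,0}-Lipschitz, ∇F is L_{F,1}-Lipschitz, f is twice differentiable with f(x, ·) σ-strongly convex for every x (σ > 0), ∇f is L_{f,1}-Lipschitz, and ∇²f is L_{f,2}-Lipschitz. Let y* : ℝ^p → ℝ^q satisfy ∇₂f(x, y*(x)) = 0 for all x, define v*(x) := [∇²₂₂f(x, y*(x))]^{-1} ∇₂F(x, y*(x)), and set r_v := L_{F,0}/σ and L_v := (L_{F,1} + L_{f,2} r_v)(1 + L_{f,1}/σ). If ‖v*(x)‖ ≤ r_v for all x, then v* is Lipschitz continuous with constant L_v/σ, i.e. ‖v*(x) − v*(x')‖ ≤ (L_v/σ)‖x − x'‖ for all x, x' ∈ ℝ^p. -/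

import Mathlib

noncomputable section

/-- `Vec d` is the Euclidean space `ℝ^d`. -/
abbrev Vec (d : ℕ) : Type := EuclideanSpace ℝ (Fin d)

open Set Filter Topology

/-- First-order condition for a convex differentiable function. -/
lemma convex_grad_le {q : ℕ} (g : Vec q → ℝ) (G : Vec q → Vec q)
    (hG : ∀ y, HasGradientAt g (G y) y) (hc : ConvexOn ℝ Set.univ g) (y z : Vec q) :
    @inner ℝ _ _ (G y) (z - y) ≤ g z - g y := by
  have hline : HasDerivAt (fun t : ℝ => y + t • (z - y)) (z - y) 0 := by
    simpa using ((hasDerivAt_id (0 : ℝ)).smul_const (z - y)).const_add y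
  have hfd : HasFDerivAt g (InnerProductSpace.toDual ℝ (Vec q) (G y)) (y + (0:ℝ) • (z - y)) := by
    simpa using (hG y).hasFDerivAt
  have hφ : HasDerivAt (fun t : ℝ => g (y + t • (z - y))) (@inner ℝ _ _ (G y) (z - y)) 0 := by
    have := hfd.comp_hasDerivAt 0 hline
    simp only [InnerProductSpace.toDual_apply_apply] at this
    exact this
  have htend := hasDerivAt_iff_tendsto_slope.mp hφ
  have htend' : Tendsto (slope (fun t : ℝ => g (y + t • (z - y))) 0) (𝓝[>] 0)
      (𝓝 (@inner ℝ _ _ (G y) (z - y))) :=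
    htend.mono_left (nhdsWithin_mono _ (fun t ht => ne_of_gt ht))
  have hev : ∀ᶠ t in 𝓝[>] (0:ℝ),
      slope (fun t : ℝ => g (y + t • (z - y))) 0 t ≤ g z - g y := by
    filter_upwards [Ioc_mem_nhdsGT (by norm_num : (0:ℝ) < 1)] with t ht
    have h1 : g (y + t • (z - y)) ≤ (1 - t) * g y + t * g z := by
      have := hc.2 (mem_univ y) (mem_univ z) (by linarith [ht.2] : (0:ℝ) ≤ 1 - t)
        (le_of_lt ht.1) (by ring)
      have heq : (1 - t) • y + t • z = y + t • (z - y) := by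
        rw [smul_sub, sub_smul]; module
      simpa [heq, smul_eq_mul] using this
    have ht0 : (0:ℝ) < t := ht.1
    rw [slope_def_field]
    simp only [zero_smul, add_zero, sub_zero]
    rw [div_le_iff₀ ht0]
    nlinarith [h1]
  exact le_of_tendsto htend' hev

/-- Strong monotonicity of the gradient of a strongly convex function. -/
lemma strong_grad_mono {q : ℕ} (σ : ℝ) (g : Vec q → ℝ) (G : Vec q → Vec q)
    (hG : ∀ y, HasGradientAt g (G y) y)
    (hc : ConvexOn ℝ Set.univ (fun y => g y - σ / 2 * ‖y‖ ^ 2)) (y z : Vec q) :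
    σ * ‖y - z‖ ^ 2 ≤ @inner ℝ _ _ (G y - G z) (y - z) := by
  set g' : Vec q → ℝ := fun y => g y - σ / 2 * ‖y‖ ^ 2 with hg'
  set G' : Vec q → Vec q := fun y => G y - σ • y with hG'
  have hGrad : ∀ y, HasGradientAt g' (G' y) y := by
    intro y
    have hn : HasFDerivAt (fun w : Vec q => σ / 2 * ‖w‖ ^ 2)
        ((σ / 2) • (2 • (innerSL ℝ y))) y := by
      have := (hasFDerivAt_id y).norm_sq.const_mul (σ / 2)
      simpa using this
    have h1 := (hG y).hasFDerivAt.sub hn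
    rw [hasGradientAt_iff_hasFDerivAt]
    refine h1.congr_fderiv (Eq.symm ?_)
    ext w
    simp only [InnerProductSpace.toDual_apply_apply, ContinuousLinearMap.sub_apply,
      ContinuousLinearMap.smul_apply, ContinuousLinearMap.smul_apply, innerSL_apply_apply, hG']
    rw [inner_sub_left, real_inner_smul_left]
    simp [smul_eq_mul]
    ring
  have h1 := convex_grad_le g' G' hGrad hc y z
  have h2 := convex_grad_le g' G' hGrad hc z y
  rw [show z - y = -(y - z) from by abel, inner_neg_right] at h1
  have hsum : @inner ℝ _ _ (G' y - G' z) (z - y) ≤ 0 := by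
    simp only [inner_sub_left, show z - y = -(y - z) from by abel, inner_neg_right]; linarith
  have hexp : @inner ℝ _ _ (G' y - G' z) (z - y)
      = - @inner ℝ _ _ (G y - G z) (y - z) + σ * ‖y - z‖ ^ 2 := by
    simp only [hG']
    have : G y - σ • y - (G z - σ • z) = (G y - G z) - σ • (y - z) := by
      rw [smul_sub]; abel
    rw [this, inner_sub_left, real_inner_smul_left,
      show z - y = -(y - z) from by abel, inner_neg_right, inner_neg_right,
      real_inner_self_eq_norm_sq]
    ring
  rw [hexp] at hsum
  linarith


/-- Coercivity of the Hessian from strong monotonicity of the gradient. -/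
lemma hessian_coercive {q : ℕ} (σ : ℝ) (G : Vec q → Vec q) (y : Vec q)
    (A : Vec q →L[ℝ] Vec q) (hA : HasFDerivAt G A y)
    (hmono : ∀ w z, σ * ‖w - z‖ ^ 2 ≤ @inner ℝ _ _ (G w - G z) (w - z)) (v : Vec q) :
    σ * ‖v‖ ^ 2 ≤ @inner ℝ _ _ (A v) v := by
  have hline : HasDerivAt (fun t : ℝ => y + t • v) v 0 := by
    simpa using ((hasDerivAt_id (0 : ℝ)).smul_const v).const_add y
  have hA' : HasFDerivAt G A (y + (0:ℝ) • v) := by simpa using hA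
  have hd : HasDerivAt (fun t : ℝ => G (y + t • v)) (A v) 0 := hA'.comp_hasDerivAt 0 hline
  have hφ : HasDerivAt (fun t : ℝ => @inner ℝ _ _ (G (y + t • v)) v) (@inner ℝ _ _ (A v) v) 0 := by
    simpa using hd.inner ℝ (hasDerivAt_const (0:ℝ) v)
  have htend := (hasDerivAt_iff_tendsto_slope.mp hφ).mono_left
    (nhdsWithin_mono _ (fun t (ht : t ∈ Set.Ioi (0:ℝ)) => ne_of_gt ht))
  refine ge_of_tendsto htend ?_
  filter_upwards [self_mem_nhdsWithin] with t (ht : t ∈ Set.Ioi (0:ℝ))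
  have ht0 : (0:ℝ) < t := ht
  rw [slope_def_field]
  simp only [zero_smul, add_zero, sub_zero]
  rw [le_div_iff₀ ht0]
  have h1 := hmono (y + t • v) y
  have h2 : (y + t • v) - y = t • v := by abel
  rw [h2] at h1
  have h3 : @inner ℝ _ _ (G (y + t • v) - G y) (t • v)
      = t * (@inner ℝ _ _ (G (y + t • v)) v - @inner ℝ _ _ (G y) v) := by
    rw [real_inner_smul_right, inner_sub_left]
  rw [h3, norm_smul] at h1
  have h4 : ‖(t:ℝ)‖ = t := abs_of_pos ht0
  rw [h4] at h1
  nlinarith [h1]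

lemma div_bound_aux (σ a c : ℝ) (hσ : 0 < σ) (ha : 0 ≤ a) (hc : 0 ≤ c)
    (h : σ * a ^ 2 ≤ c * a) : a ≤ c / σ := by
  rcases ha.eq_or_lt with h0 | h0
  · rw [← h0]; positivity
  · rw [le_div_iff₀ hσ]; nlinarith

lemma sq_le_imp {a b : ℝ} (ha : 0 ≤ a) (hb : 0 ≤ b) (h : a ^ 2 ≤ b ^ 2) : a ≤ b := by
  nlinarith [sq_nonneg (a - b), sq_nonneg (a + b)]


/-- Lipschitz continuity of `v*(x) = [∇²₂₂f(x, y*(x))]⁻¹ ∇₂F(x, y*(x))`: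
under the stated assumptions (with `r_v = L_{F,0}/σ` and
`L_v = (L_{F,1} + L_{f,2} r_v)(1 + L_{f,1}/σ)`), if `‖v*(x)‖ ≤ r_v` for all `x`, then
`‖v*(x) − v*(x')‖ ≤ (L_v/σ) ‖x − x'‖`. Here `v*` is characterized by the linear system
`∇²₂₂f(x, y*(x)) v*(x) = ∇₂F(x, y*(x))` (the Hessian is invertible by strong convexity). -/
theorem vstar_lipschitz {p q : ℕ}
    (σ LF0 LF1 Lf1 Lf2 rv Lv : ℝ)
    (hσ : 0 < σ) (hLF0 : 0 ≤ LF0) (hLF1 : 0 ≤ LF1) (hLf1 : 0 ≤ Lf1) (hLf2 : 0 ≤ Lf2)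
    (hrv : rv = LF0 / σ)
    (hLv : Lv = (LF1 + Lf2 * rv) * (1 + Lf1 / σ))
    (F f : Vec p → Vec q → ℝ)
    (gF1 : Vec p → Vec q → Vec p) (gF2 : Vec p → Vec q → Vec q)
    (g1 : Vec p → Vec q → Vec p) (g2 : Vec p → Vec q → Vec q)
    (f22 : Vec p → Vec q → (Vec q →L[ℝ] Vec q))
    -- `gF1, gF2` are the partial gradients of `F`, `g1, g2` those of `f`
    (hgF1 : ∀ x y, HasGradientAt (fun x' => F x' y) (gF1 x y) x)
    (hgF2 : ∀ x y, HasGradientAt (fun y' => F x y') (gF2 x y) y)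
    (hg1 : ∀ x y, HasGradientAt (fun x' => f x' y) (g1 x y) x)
    (hg2 : ∀ x y, HasGradientAt (fun y' => f x y') (g2 x y) y)
    -- `f22 x y` is the Hessian of `f` w.r.t. the second block
    (hf22 : ∀ x y, HasFDerivAt (fun y' => g2 x y') (f22 x y) y)
    -- `F` is `L_{F,0}`-Lipschitz
    (hFlip : ∀ x y x' y',
      |F x y - F x' y'| ≤ LF0 * Real.sqrt (‖x - x'‖ ^ 2 + ‖y - y'‖ ^ 2))
    -- `∇F` is `L_{F,1}`-Lipschitz
    (hgFlip : ∀ x y x' y',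
      ‖gF1 x y - gF1 x' y'‖ ^ 2 + ‖gF2 x y - gF2 x' y'‖ ^ 2
        ≤ LF1 ^ 2 * (‖x - x'‖ ^ 2 + ‖y - y'‖ ^ 2))
    -- `∇f` is `L_{f,1}`-Lipschitz
    (hglip : ∀ x y x' y',
      ‖g1 x y - g1 x' y'‖ ^ 2 + ‖g2 x y - g2 x' y'‖ ^ 2
        ≤ Lf1 ^ 2 * (‖x - x'‖ ^ 2 + ‖y - y'‖ ^ 2))
    -- `∇²f` is `L_{f,2}`-Lipschitz
    (hf22lip : ∀ x y x' y',
      ‖f22 x y - f22 x' y'‖ ≤ Lf2 * Real.sqrt (‖x - x'‖ ^ 2 + ‖y - y'‖ ^ 2))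
    -- `f(x, ·)` is `σ`-strongly convex for every `x`
    (hsc : ∀ x, ConvexOn ℝ Set.univ (fun y : Vec q => f x y - σ / 2 * ‖y‖ ^ 2))
    -- `y*` satisfies `∇₂f(x, y*(x)) = 0` for all `x`
    (ystar : Vec p → Vec q) (hystar : ∀ x, g2 x (ystar x) = 0)
    -- `v*` solves `∇²₂₂f(x, y*(x)) v*(x) = ∇₂F(x, y*(x))` and `‖v*(x)‖ ≤ r_v`
    (vstar : Vec p → Vec q)
    (hvstar : ∀ x, (f22 x (ystar x)) (vstar x) = gF2 x (ystar x))
    (hvstar_norm : ∀ x, ‖vstar x‖ ≤ rv) :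
    ∀ x x', ‖vstar x - vstar x'‖ ≤ Lv / σ * ‖x - x'‖ := by

  intro x x'
  have hrv0 : 0 ≤ rv := hrv ▸ div_nonneg hLF0 hσ.le
  have hLv0 : 0 ≤ Lv := by
    rw [hLv]; positivity
  have hmono : ∀ xx w z, σ * ‖w - z‖ ^ 2 ≤ @inner ℝ _ _ (g2 xx w - g2 xx z) (w - z) :=
    fun xx => strong_grad_mono σ (f xx) (g2 xx) (hg2 xx) (hsc xx)
  -- Step 1: y* is (Lf1/σ)-Lipschitz
  have hy : ‖ystar x - ystar x'‖ ≤ Lf1 / σ * ‖x - x'‖ := by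
    have h1 := hmono x' (ystar x) (ystar x')
    have h2 : g2 x' (ystar x) - g2 x' (ystar x') = g2 x' (ystar x) - g2 x (ystar x) := by
      rw [hystar x', hystar x]
    rw [h2] at h1
    have h3 := real_inner_le_norm (g2 x' (ystar x) - g2 x (ystar x)) (ystar x - ystar x')
    have h4 : ‖g2 x' (ystar x) - g2 x (ystar x)‖ ≤ Lf1 * ‖x - x'‖ := by
      have h5 := hglip x' (ystar x) x (ystar x)
      have h6 : ‖x' - x‖ = ‖x - x'‖ := norm_sub_rev _ _
      simp only [sub_self, norm_zero, h6] at h5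
      refine sq_le_imp (norm_nonneg _) (by positivity) ?_
      rw [mul_pow]
      nlinarith [sq_nonneg (‖g1 x' (ystar x) - g1 x (ystar x)‖)]
    have h7 : σ * ‖ystar x - ystar x'‖ ^ 2
        ≤ (Lf1 * ‖x - x'‖) * ‖ystar x - ystar x'‖ := by
      calc σ * ‖ystar x - ystar x'‖ ^ 2 ≤ _ := h1
        _ ≤ ‖g2 x' (ystar x) - g2 x (ystar x)‖ * ‖ystar x - ystar x'‖ := h3
        _ ≤ (Lf1 * ‖x - x'‖) * ‖ystar x - ystar x'‖ :=
          mul_le_mul_of_nonneg_right h4 (norm_nonneg _)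
    have := div_bound_aux σ ‖ystar x - ystar x'‖ (Lf1 * ‖x - x'‖) hσ (norm_nonneg _)
      (by positivity) h7
    calc ‖ystar x - ystar x'‖ ≤ Lf1 * ‖x - x'‖ / σ := this
      _ = Lf1 / σ * ‖x - x'‖ := by ring
  -- Step 2
  set s := Real.sqrt (‖x - x'‖ ^ 2 + ‖ystar x - ystar x'‖ ^ 2) with hs
  have hs0 : 0 ≤ s := Real.sqrt_nonneg _
  have hssq : s ^ 2 = ‖x - x'‖ ^ 2 + ‖ystar x - ystar x'‖ ^ 2 :=
    Real.sq_sqrt (by positivity)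
  have hs_le : s ≤ (1 + Lf1 / σ) * ‖x - x'‖ := by
    refine sq_le_imp hs0 (by positivity) ?_
    rw [hssq]
    nlinarith [hy, norm_nonneg (ystar x - ystar x'), norm_nonneg (x - x'),
      div_nonneg hLf1 hσ.le]
  have hcoer := hessian_coercive σ (g2 x) (ystar x) (f22 x (ystar x)) (hf22 x (ystar x))
    (hmono x) (vstar x - vstar x')
  have hAv : (f22 x (ystar x)) (vstar x - vstar x')
      = (gF2 x (ystar x) - gF2 x' (ystar x'))
        + ((f22 x' (ystar x') - f22 x (ystar x)) (vstar x')) := by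
    rw [map_sub, hvstar x, ContinuousLinearMap.sub_apply, hvstar x']
    abel
  have hbound1 : ‖gF2 x (ystar x) - gF2 x' (ystar x')‖ ≤ LF1 * s := by
    refine sq_le_imp (norm_nonneg _) (by positivity) ?_
    have h5 := hgFlip x (ystar x) x' (ystar x')
    rw [mul_pow, hssq]
    nlinarith [sq_nonneg (‖gF1 x (ystar x) - gF1 x' (ystar x')‖)]
  have hbound2 : ‖(f22 x' (ystar x') - f22 x (ystar x)) (vstar x')‖ ≤ Lf2 * s * rv := by
    have h6 := (f22 x' (ystar x') - f22 x (ystar x)).le_opNorm (vstar x')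
    have h7 := hf22lip x' (ystar x') x (ystar x)
    have h8 : Real.sqrt (‖x' - x‖ ^ 2 + ‖ystar x' - ystar x‖ ^ 2) = s := by
      rw [hs, norm_sub_rev x' x, norm_sub_rev (ystar x') (ystar x)]
    rw [h8] at h7
    calc ‖(f22 x' (ystar x') - f22 x (ystar x)) (vstar x')‖
        ≤ ‖f22 x' (ystar x') - f22 x (ystar x)‖ * ‖vstar x'‖ := h6
      _ ≤ (Lf2 * s) * rv := by
          apply mul_le_mul h7 (hvstar_norm x') (norm_nonneg _) (by positivity)
  have hinner : @inner ℝ _ _ ((f22 x (ystar x)) (vstar x - vstar x')) (vstar x - vstar x')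
      ≤ (LF1 * s + Lf2 * s * rv) * ‖vstar x - vstar x'‖ := by
    rw [hAv]
    calc @inner ℝ _ _ _ (vstar x - vstar x')
        ≤ ‖(gF2 x (ystar x) - gF2 x' (ystar x'))
            + ((f22 x' (ystar x') - f22 x (ystar x)) (vstar x'))‖ * ‖vstar x - vstar x'‖ :=
          real_inner_le_norm _ _
      _ ≤ (‖gF2 x (ystar x) - gF2 x' (ystar x')‖
            + ‖(f22 x' (ystar x') - f22 x (ystar x)) (vstar x')‖) * ‖vstar x - vstar x'‖ :=
          mul_le_mul_of_nonneg_right (norm_add_le _ _) (norm_nonneg _)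
      _ ≤ (LF1 * s + Lf2 * s * rv) * ‖vstar x - vstar x'‖ :=
          mul_le_mul_of_nonneg_right (add_le_add hbound1 hbound2) (norm_nonneg _)
  have hfin : σ * ‖vstar x - vstar x'‖ ^ 2 ≤ (Lv * ‖x - x'‖) * ‖vstar x - vstar x'‖ := by
    have h9 : LF1 * s + Lf2 * s * rv ≤ Lv * ‖x - x'‖ := by
      have h10 : LF1 * s + Lf2 * s * rv = (LF1 + Lf2 * rv) * s := by ring
      rw [h10, hLv]
      have h11 : 0 ≤ LF1 + Lf2 * rv := by positivity
      calc (LF1 + Lf2 * rv) * s ≤ (LF1 + Lf2 * rv) * ((1 + Lf1 / σ) * ‖x - x'‖) :=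
            mul_le_mul_of_nonneg_left hs_le h11
        _ = (LF1 + Lf2 * rv) * (1 + Lf1 / σ) * ‖x - x'‖ := by ring
    calc σ * ‖vstar x - vstar x'‖ ^ 2 ≤ _ := hcoer
      _ ≤ (LF1 * s + Lf2 * s * rv) * ‖vstar x - vstar x'‖ := hinner
      _ ≤ (Lv * ‖x - x'‖) * ‖vstar x - vstar x'‖ :=
          mul_le_mul_of_nonneg_right h9 (norm_nonneg _)
  have := div_bound_aux σ ‖vstar x - vstar x'‖ (Lv * ‖x - x'‖) hσ (norm_nonneg _)
    (by positivity) hfin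
  calc ‖vstar x - vstar x'‖ ≤ Lv * ‖x - x'‖ / σ := this
    _ = Lv / σ * ‖x - x'‖ := by ring
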